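/- Any embedding f of the 3-star K_{1,3} (a root with three children, graph distance: root to leaf is 1, leaf to leaf is 2) into Euclidean space ℝ^n has distortion at least 2/√3. That is, there is no r > 0 and D < 2/√3 with r·d_G(i,j) ≤ ‖f(i)-f(j)‖ ≤ D·r·d_G(i,j) for all pairs i,j. -/

import Mathlib

/-- Graph distance on the 3-star `K_{1,3}`: vertex `0` is the root,
vertices `1,2,3` are the leaves. -/
def dK13 (i j : Fin 4) : ℝ :=
  if i = j then 0 else if i = 0 ∨ j = 0 then 1 else 2

lemma star_key {E : Type*} [NormedAddCommGroup E] [InnerProductSpace ℝ E]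
    (u v w : E) :
    ‖u - v‖ ^ 2 + ‖v - w‖ ^ 2 + ‖w - u‖ ^ 2 ≤ 3 * (‖u‖ ^ 2 + ‖v‖ ^ 2 + ‖w‖ ^ 2) := by
  have h0 : (0 : ℝ) ≤ ‖u + v + w‖ ^ 2 := sq_nonneg _
  have h1 : ‖u - v‖ ^ 2 = ‖u‖ ^ 2 - 2 * inner ℝ u v + ‖v‖ ^ 2 := norm_sub_sq_real u v
  have h2 : ‖v - w‖ ^ 2 = ‖v‖ ^ 2 - 2 * inner ℝ v w + ‖w‖ ^ 2 := norm_sub_sq_real v w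
  have h3 : ‖w - u‖ ^ 2 = ‖w‖ ^ 2 - 2 * inner ℝ w u + ‖u‖ ^ 2 := norm_sub_sq_real w u
  have h4 : ‖u + v + w‖ ^ 2 = ‖u + v‖ ^ 2 + 2 * inner ℝ (u + v) w + ‖w‖ ^ 2 :=
    norm_add_sq_real (u + v) w
  have h5 : ‖u + v‖ ^ 2 = ‖u‖ ^ 2 + 2 * inner ℝ u v + ‖v‖ ^ 2 := norm_add_sq_real u v
  have h6 : (inner ℝ (u + v) w : ℝ) = inner ℝ u w + inner ℝ v w := inner_add_left u v w
  have h7 : (inner ℝ u w : ℝ) = inner ℝ w u := real_inner_comm w u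
  linarith

set_option maxHeartbeats 1000000 in
/-- Every Euclidean embedding of `K_{1,3}` has distortion at least `2/√3`. -/
theorem k13_distortion_lower_bound {n : ℕ} (f : Fin 4 → EuclideanSpace ℝ (Fin n))
    (r D : ℝ) (hr : 0 < r) (hD : D < 2 / Real.sqrt 3) :
    ¬ (∀ i j : Fin 4,
        r * dK13 i j ≤ ‖f i - f j‖ ∧ ‖f i - f j‖ ≤ D * r * dK13 i j) := by
  intro h
  have d01 : dK13 0 1 = 1 := by unfold dK13; rw [if_neg (by decide), if_pos (Or.inl rfl)]
  have d02 : dK13 0 2 = 1 := by unfold dK13; rw [if_neg (by decide), if_pos (Or.inl rfl)]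
  have d03 : dK13 0 3 = 1 := by unfold dK13; rw [if_neg (by decide), if_pos (Or.inl rfl)]
  have d12 : dK13 1 2 = 2 := by unfold dK13; rw [if_neg (by decide), if_neg (by decide)]
  have d23 : dK13 2 3 = 2 := by unfold dK13; rw [if_neg (by decide), if_neg (by decide)]
  have d31 : dK13 3 1 = 2 := by unfold dK13; rw [if_neg (by decide), if_neg (by decide)]
  have h01 := h 0 1; rw [d01, mul_one, mul_one] at h01
  have h02 := h 0 2; rw [d02, mul_one, mul_one] at h02
  have h03 := h 0 3; rw [d03, mul_one, mul_one] at h03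
  have h12 := h 1 2; rw [d12] at h12
  have h23 := h 2 3; rw [d23] at h23
  have h31 := h 3 1; rw [d31] at h31
  have hD1 : r ≤ D * r := le_trans (by linarith [h01.1]) h01.2
  have hDpos : 0 < D := by nlinarith
  have han := norm_nonneg (f 0 - f 1)
  have hbn := norm_nonneg (f 0 - f 2)
  have hcn := norm_nonneg (f 0 - f 3)
  have hxn := norm_nonneg (f 1 - f 2)
  have hyn := norm_nonneg (f 2 - f 3)
  have hzn := norm_nonneg (f 3 - f 1)
  set u := f 1 - f 0 with hu
  set v := f 2 - f 0 with hv
  set w := f 3 - f 0 with hw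
  have key := star_key u v w
  have eu : u - v = f 1 - f 2 := sub_sub_sub_cancel_right _ _ _
  have ev : v - w = f 2 - f 3 := sub_sub_sub_cancel_right _ _ _
  have ew : w - u = f 3 - f 1 := sub_sub_sub_cancel_right _ _ _
  rw [eu, ev, ew] at key
  have nu : ‖u‖ = ‖f 0 - f 1‖ := norm_sub_rev _ _
  have nv : ‖v‖ = ‖f 0 - f 2‖ := norm_sub_rev _ _
  have nw : ‖w‖ = ‖f 0 - f 3‖ := norm_sub_rev _ _
  rw [nu, nv, nw] at key
  -- abstract all six norms as real numbers
  set a := ‖f 0 - f 1‖ with ha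
  set b := ‖f 0 - f 2‖ with hb
  set c := ‖f 0 - f 3‖ with hc
  set x := ‖f 1 - f 2‖ with hx
  set y := ‖f 2 - f 3‖ with hy
  set z := ‖f 3 - f 1‖ with hz
  clear_value a b c x y z
  clear ha hb hc hx hy hz hu hv hw nu nv nw eu ev ew h
  have s12 : (2 * r) ^ 2 ≤ x ^ 2 :=
    pow_le_pow_left₀ (by positivity) (by linarith [h12.1]) 2
  have s23 : (2 * r) ^ 2 ≤ y ^ 2 :=
    pow_le_pow_left₀ (by positivity) (by linarith [h23.1]) 2
  have s31 : (2 * r) ^ 2 ≤ z ^ 2 :=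
    pow_le_pow_left₀ (by positivity) (by linarith [h31.1]) 2
  have t01 : a ^ 2 ≤ (D * r) ^ 2 := pow_le_pow_left₀ han h01.2 2
  have t02 : b ^ 2 ≤ (D * r) ^ 2 := pow_le_pow_left₀ hbn h02.2 2
  have t03 : c ^ 2 ≤ (D * r) ^ 2 := pow_le_pow_left₀ hcn h03.2 2
  have hsq : 4 / 3 ≤ D ^ 2 := by
    nlinarith [key, mul_pos hr hr, sq_nonneg (D * r)]
  have hs3 : (0:ℝ) < Real.sqrt 3 := by positivity
  have hs3sq : Real.sqrt 3 ^ 2 = 3 := Real.sq_sqrt (by norm_num)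
  have hlt : D * Real.sqrt 3 < 2 := (lt_div_iff₀ hs3).mp hD
  nlinarith [hlt, hsq, hs3sq, hDpos, hs3, mul_pos hDpos hs3]
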